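/- arXiv:1207.0108 — 2 statements merged into one kernel-verified Lean document; each statement's English description precedes it below -/
import Mathlib

section
/- Let (q_k)_{k≥1} and α_{k,i} be as in the four-species coefficient setup. Then for every k ≥ 1, ∫₀¹ q_k(x) dx = 1/4; equivalently, Σ_{j≥1} α_{k,j}/(j+1) = 1/4. -/
open MeasureTheory Polynomial

section BS4Helpers
open intervalIntegral Set

lemma prim_hasDerivAt (f : ℝ → ℝ) (hf : Continuous f) (a x : ℝ) :
    HasDerivAt (fun u => ∫ t in a..u, f t) (f x) x :=
  integral_hasDerivAt_right (hf.intervalIntegrable _ _)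
    (hf.stronglyMeasurableAtFilter _ _) hf.continuousAt

lemma prim_continuous (f : ℝ → ℝ) (hf : Continuous f) (a : ℝ) :
    Continuous (fun u => ∫ t in a..u, f t) :=
  continuous_iff_continuousAt.2 fun x => (prim_hasDerivAt f hf a x).continuousAt

lemma integral_if_gt {c : ℝ} (hc0 : 0 ≤ c) (hc1 : c ≤ 1) (φ : ℝ → ℝ) (hφ : Continuous φ) :
    (∫ t in (0:ℝ)..1, if c < t then φ t else 0) = ∫ t in c..1, φ t := by
  have e1 : EqOn (fun _ : ℝ => (0:ℝ)) (fun t => if c < t then φ t else 0) (Ioc 0 c) := by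
    intro t ht
    simp only [if_neg (not_lt.2 ht.2)]
  have e2 : EqOn φ (fun t => if c < t then φ t else 0) (Ioc c 1) := by
    intro t ht
    simp only [if_pos ht.1]
  have hint1 : IntervalIntegrable (fun t => if c < t then φ t else 0) volume 0 c := by
    rw [intervalIntegrable_iff, uIoc_of_le hc0]
    exact (integrableOn_zero).congr_fun e1 measurableSet_Ioc
  have hint2 : IntervalIntegrable (fun t => if c < t then φ t else 0) volume c 1 := by
    rw [intervalIntegrable_iff, uIoc_of_le hc1]
    exact (hφ.integrableOn_Ioc).congr_fun e2 measurableSet_Ioc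
  rw [← integral_add_adjacent_intervals hint1 hint2]
  rw [integral_of_le hc0, setIntegral_congr_fun measurableSet_Ioc e1.symm]
  rw [integral_of_le hc1, setIntegral_congr_fun measurableSet_Ioc e2.symm]
  simp [integral_of_le hc1]

lemma integral_if_lt {m : ℝ} (hm0 : 0 ≤ m) (hm1 : m ≤ 1) (φ : ℝ → ℝ) (hφ : Continuous φ) :
    (∫ t in (0:ℝ)..1, if t < m then φ t else 0) = ∫ t in (0:ℝ)..m, φ t := by
  have e1 : EqOn φ (fun t => if t < m then φ t else 0) (Ioo 0 m) := by
    intro t ht; simp only [if_pos ht.2]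
  have e2 : EqOn (fun _ : ℝ => (0:ℝ)) (fun t => if t < m then φ t else 0) (Ioc m 1) := by
    intro t ht; simp only [if_neg (not_lt.2 ht.1.le)]
  have hint1 : IntervalIntegrable (fun t => if t < m then φ t else 0) volume 0 m := by
    rw [intervalIntegrable_iff, uIoc_of_le hm0, integrableOn_Ioc_iff_integrableOn_Ioo]
    exact ((hφ.integrableOn_Ioc.mono_set Ioo_subset_Ioc_self)).congr_fun e1 measurableSet_Ioo
  have hint2 : IntervalIntegrable (fun t => if t < m then φ t else 0) volume m 1 := by
    rw [intervalIntegrable_iff, uIoc_of_le hm1]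
    exact (integrableOn_zero).congr_fun e2 measurableSet_Ioc
  rw [← integral_add_adjacent_intervals hint1 hint2]
  rw [integral_of_le hm0, integral_Ioc_eq_integral_Ioo,
    setIntegral_congr_fun measurableSet_Ioo e1.symm]
  rw [integral_of_le hm1, setIntegral_congr_fun measurableSet_Ioc e2.symm]
  simp [integral_of_le hm0, integral_Ioc_eq_integral_Ioo]

lemma swap_lemma (g h : ℝ → ℝ) (hg : Continuous g) (hh : Continuous h) :
    ∫ x in (0:ℝ)..1, g x * (∫ t in (0:ℝ)..x, h t)
      = ∫ u in (0:ℝ)..1, (∫ t in u..1, g t) * h u := by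
  set H : ℝ → ℝ := fun x => ∫ t in (0:ℝ)..x, h t with hH
  set Gc : ℝ → ℝ := fun x => ∫ t in x..1, g t with hGc
  have hHc : Continuous H := prim_continuous h hh 0
  have hGder : ∀ x, HasDerivAt Gc (-(g x)) x := by
    intro x
    have : Gc = fun x => -∫ t in (1:ℝ)..x, g t := by
      funext y
      show (∫ t in y..(1:ℝ), g t) = -∫ t in (1:ℝ)..y, g t
      rw [intervalIntegral.integral_symm]
    rw [this]
    exact (prim_hasDerivAt g hg 1 x).neg
  have hGcc : Continuous Gc := continuous_iff_continuousAt.2 fun x => (hGder x).continuousAt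
  have hder : ∀ x ∈ uIcc (0:ℝ) 1,
      HasDerivAt (fun x => Gc x * H x) (-(g x) * H x + Gc x * h x) x := by
    intro x _
    exact (hGder x).mul (prim_hasDerivAt h hh 0 x)
  have hint : IntervalIntegrable (fun x => -(g x) * H x + Gc x * h x) volume 0 1 :=
    (((hg.neg.mul hHc).add (hGcc.mul hh)).intervalIntegrable _ _)
  have := integral_eq_sub_of_hasDerivAt hder hint
  have hend : Gc 1 * H 1 - Gc 0 * H 0 = 0 := by
    have hG1 : Gc 1 = 0 := integral_same
    have hH0 : H 0 = 0 := integral_same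
    rw [hG1, hH0]; ring
  rw [hend] at this
  have hsplit : (∫ x in (0:ℝ)..1, (-(g x) * H x + Gc x * h x))
      = -(∫ x in (0:ℝ)..1, g x * H x) + ∫ x in (0:ℝ)..1, Gc x * h x := by
    rw [integral_add (f := fun x => -(g x) * H x) (g := fun x => Gc x * h x) ((hg.neg.mul hHc).intervalIntegrable _ _) ((hGcc.mul hh).intervalIntegrable _ _)]
    congr 1
    rw [← intervalIntegral.integral_neg]
    congr 1; funext x; ring
  rw [hsplit] at this
  linarith [this]

lemma poly_int (a b c0 c1 c2 c3 : ℝ) :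
    ∫ t in a..b, (c0 + c1*t + c2*t^2 + c3*t^3)
      = c0*(b-a) + c1*(b^2-a^2)/2 + c2*(b^3-a^3)/3 + c3*(b^4-a^4)/4 := by
  have h : ∀ n : ℕ, ∀ c : ℝ, IntervalIntegrable (fun t : ℝ => c * t^n) volume a b :=
    fun n c => ((continuous_const.mul (continuous_pow n)).intervalIntegrable a b)
  have e : (fun t : ℝ => c0 + c1*t + c2*t^2 + c3*t^3)
      = fun t => c0*t^0 + c1*t^1 + c2*t^2 + c3*t^3 := by funext t; ring
  rw [e, integral_add (((h 0 c0).add (h 1 c1)).add (h 2 c2)) (h 3 c3),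
    integral_add ((h 0 c0).add (h 1 c1)) (h 2 c2), integral_add (h 0 c0) (h 1 c1)]
  rw [intervalIntegral.integral_const_mul, intervalIntegral.integral_const_mul,
    intervalIntegral.integral_const_mul, intervalIntegral.integral_const_mul,
    integral_pow, integral_pow, integral_pow, integral_pow]
  push_cast
  ring

lemma key (f : ℝ → ℝ) (hf : Continuous f) :
    (∫ x in (0:ℝ)..1, ∫ ξ₁ in (0:ℝ)..1, ∫ ξ₂ in (0:ℝ)..1, ∫ ξ₃ in (0:ℝ)..1,
        if ξ₂ < min ξ₁ (min ξ₃ x) then f x + f ξ₁ + f ξ₂ + f ξ₃ else 0)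
      = ∫ t in (0:ℝ)..1, f t := by
  have h01 : (0:ℝ) ≤ 1 := by norm_num
  have huIcc : uIcc (0:ℝ) 1 = Icc 0 1 := uIcc_of_le h01
  set S : ℝ := ∫ t in (0:ℝ)..1, f t with hS
  set F : ℝ → ℝ := fun u => ∫ t in (0:ℝ)..u, f t with hFdef
  have hFc : Continuous F := prim_continuous f hf 0
  have hFsplit : ∀ u : ℝ, (∫ t in u..(1:ℝ), f t) = S - F u := by
    intro u
    have h : (∫ t in (0:ℝ)..u, f t) + (∫ t in u..(1:ℝ), f t) = ∫ t in (0:ℝ)..1, f t :=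
      integral_add_adjacent_intervals (hf.intervalIntegrable 0 u) (hf.intervalIntegrable u 1)
    simp only [hS, hFdef]
    linarith [h]
  set A : ℝ → ℝ := fun m => m - m^2/2 with hAdef
  have hAc : Continuous A := by fun_prop
  set d : ℝ → ℝ := fun t => f t * (1 - t) + (S - F t) with hddef
  have hdc : Continuous d := by fun_prop
  set D : ℝ → ℝ := fun m => ∫ t in (0:ℝ)..m, d t with hDdef
  have hDc : Continuous D := prim_continuous d hdc 0
  -- Step A : innermost integral
  have stepA : ∀ x ξ₁ ξ₂ : ℝ, ξ₂ ∈ Icc (0:ℝ) 1 →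
      (∫ ξ₃ in (0:ℝ)..1, if ξ₂ < min ξ₁ (min ξ₃ x) then f x + f ξ₁ + f ξ₂ + f ξ₃ else 0)
      = (if ξ₂ < min ξ₁ x then (f x + f ξ₁ + f ξ₂) * (1 - ξ₂) + (S - F ξ₂) else 0) := by
    intro x ξ₁ ξ₂ hξ₂
    by_cases h : ξ₂ < min ξ₁ x
    · rw [if_pos h]
      have h1 : ξ₂ < ξ₁ := lt_of_lt_of_le h (min_le_left _ _)
      have h2 : ξ₂ < x := lt_of_lt_of_le h (min_le_right _ _)
      have e : (fun ξ₃ => if ξ₂ < min ξ₁ (min ξ₃ x) then f x + f ξ₁ + f ξ₂ + f ξ₃ else 0)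
          = fun ξ₃ => if ξ₂ < ξ₃ then (f x + f ξ₁ + f ξ₂) + f ξ₃ else 0 := by
        funext ξ₃
        by_cases h3 : ξ₂ < ξ₃
        · rw [if_pos (by simp [lt_min_iff, h1, h2, h3]), if_pos h3]
        · rw [if_neg (by simp [lt_min_iff, h3]), if_neg h3]
      rw [e, integral_if_gt hξ₂.1 hξ₂.2 _ (by fun_prop)]
      rw [integral_add (continuous_const.intervalIntegrable _ _) (hf.intervalIntegrable _ _),
        intervalIntegral.integral_const, hFsplit ξ₂]
      simp only [smul_eq_mul]
      ring
    · rw [if_neg h]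
      have e : (fun ξ₃ => if ξ₂ < min ξ₁ (min ξ₃ x) then f x + f ξ₁ + f ξ₂ + f ξ₃ else 0)
          = fun _ => (0:ℝ) := by
        funext ξ₃
        rw [if_neg]
        intro hc
        rw [lt_min_iff, lt_min_iff] at hc
        exact h (lt_min hc.1 hc.2.2)
      rw [e]
      simp
  -- Step B : second integral
  have stepB : ∀ x ∈ Icc (0:ℝ) 1, ∀ ξ₁ ∈ Icc (0:ℝ) 1,
      (∫ ξ₂ in (0:ℝ)..1, ∫ ξ₃ in (0:ℝ)..1,
          if ξ₂ < min ξ₁ (min ξ₃ x) then f x + f ξ₁ + f ξ₂ + f ξ₃ else 0)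
      = (f x + f ξ₁) * A (min ξ₁ x) + D (min ξ₁ x) := by
    intro x hx ξ₁ hξ₁
    have hm0 : 0 ≤ min ξ₁ x := le_min hξ₁.1 hx.1
    have hm1 : min ξ₁ x ≤ 1 := (min_le_right _ _).trans hx.2
    rw [intervalIntegral.integral_congr
      (g := fun ξ₂ => if ξ₂ < min ξ₁ x then (f x + f ξ₁ + f ξ₂) * (1 - ξ₂) + (S - F ξ₂) else 0)
      (fun ξ₂ hξ₂ => stepA x ξ₁ ξ₂ (huIcc ▸ hξ₂))]
    rw [integral_if_lt hm0 hm1 _ (by fun_prop)]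
    rw [intervalIntegral.integral_congr
      (g := fun t => (f x + f ξ₁) * (1 - t) + d t)
      (fun t _ => by simp only [hddef]; ring)]
    rw [integral_add (f := fun t => (f x + f ξ₁) * (1 - t)) ((continuous_const.mul (by fun_prop : Continuous fun t : ℝ => 1 - t)).intervalIntegrable _ _)
      (hdc.intervalIntegrable _ _)]
    congr 1
    rw [intervalIntegral.integral_const_mul]
    congr 1
    rw [intervalIntegral.integral_congr
      (g := fun t : ℝ => 1 + (-1)*t + 0*t^2 + 0*t^3) (fun t _ => by ring), poly_int]
    simp only [hAdef]
    ring
  -- Step C : third integral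
  have stepC : ∀ x ∈ Icc (0:ℝ) 1,
      (∫ ξ₁ in (0:ℝ)..1, ∫ ξ₂ in (0:ℝ)..1, ∫ ξ₃ in (0:ℝ)..1,
          if ξ₂ < min ξ₁ (min ξ₃ x) then f x + f ξ₁ + f ξ₂ + f ξ₃ else 0)
      = f x * (∫ t in (0:ℝ)..x, A t) + (∫ t in (0:ℝ)..x, (f t * A t + D t))
        + ((f x * A x + D x) * (1 - x) + A x * (S - F x)) := by
    intro x hx
    rw [intervalIntegral.integral_congr
      (g := fun ξ₁ => (f x + f ξ₁) * A (min ξ₁ x) + D (min ξ₁ x))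
      (fun ξ₁ hξ₁ => stepB x hx ξ₁ (huIcc ▸ hξ₁))]
    have hφc : Continuous (fun ξ₁ => (f x + f ξ₁) * A (min ξ₁ x) + D (min ξ₁ x)) := by
      have hmin : Continuous (fun ξ₁ : ℝ => min ξ₁ x) := continuous_id.min continuous_const
      exact ((continuous_const.add hf).mul (hAc.comp hmin)).add (hDc.comp hmin)
    rw [← integral_add_adjacent_intervals (hφc.intervalIntegrable 0 x)
      (hφc.intervalIntegrable x 1)]
    congr 1
    · rw [intervalIntegral.integral_congr
        (g := fun u => f x * A u + (f u * A u + D u)) (fun u hu => ?_)]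
      · rw [integral_add (f := fun u => f x * A u) (g := fun u => f u * A u + D u) ((continuous_const.mul hAc).intervalIntegrable _ _)
          (((hf.mul hAc).add hDc).intervalIntegrable _ _), intervalIntegral.integral_const_mul]
      · rw [uIcc_of_le hx.1] at hu
        rw [min_eq_left hu.2]
        ring
    · rw [intervalIntegral.integral_congr
        (g := fun ξ₁ => (f x * A x + D x) + A x * f ξ₁) (fun u hu => ?_)]
      · rw [integral_add (g := fun u => A x * f u) (continuous_const.intervalIntegrable _ _)
          ((continuous_const.mul hf).intervalIntegrable _ _), intervalIntegral.integral_const,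
          intervalIntegral.integral_const_mul, hFsplit x]
        simp only [smul_eq_mul]
        ring
      · rw [uIcc_of_le hx.2] at hu
        rw [min_eq_right hu.1]
        ring
  -- Step D : integrate over x
  set aA : ℝ → ℝ := fun x => ∫ t in (0:ℝ)..x, A t with haAdef
  have haAc : Continuous aA := prim_continuous A hAc 0
  set r : ℝ → ℝ := fun t => f t * A t + D t with hrdef
  have hrc : Continuous r := by fun_prop
  set R : ℝ → ℝ := fun x => ∫ t in (0:ℝ)..x, r t with hRdef
  have hRc : Continuous R := prim_continuous r hrc 0
  rw [intervalIntegral.integral_congr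
    (g := fun x => f x * aA x + R x + ((f x * A x + D x) * (1 - x) + A x * (S - F x)))
    (fun x hx => stepC x (huIcc ▸ hx))]
  have hc1 : Continuous fun x => f x * aA x := hf.mul haAc
  have hc2 : Continuous fun x => (f x * A x + D x) * (1 - x) + A x * (S - F x) := by fun_prop
  rw [integral_add (f := fun x => f x * aA x + R x) ((hc1.add hRc).intervalIntegrable _ _) (hc2.intervalIntegrable _ _),
    integral_add (hc1.intervalIntegrable _ _) (hRc.intervalIntegrable _ _)]
  -- aA explicitly
  have haA : ∀ x : ℝ, aA x = x^2/2 - x^3/6 := by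
    intro x
    simp only [haAdef, hAdef]
    rw [intervalIntegral.integral_congr (g := fun t : ℝ => 0 + 1*t + (-(1:ℝ)/2)*t^2 + 0*t^3)
      (fun t _ => by ring), poly_int]
    ring
  have hp1 : (∫ x in (0:ℝ)..1, f x * aA x) = ∫ x in (0:ℝ)..1, f x * (x^2/2 - x^3/6) :=
    intervalIntegral.integral_congr (fun x _ => by rw [haA x])
  -- ∫ R via swap
  have hR : (∫ x in (0:ℝ)..1, R x) = ∫ u in (0:ℝ)..1, (1-u) * r u := by
    have h := swap_lemma (fun _ => 1) r continuous_const hrc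
    beta_reduce at h
    rw [intervalIntegral.integral_congr (g := fun x => (1:ℝ) * (∫ t in (0:ℝ)..x, r t))
      (fun x _ => by simp [hRdef]), h]
    refine intervalIntegral.integral_congr (fun u _ => ?_)
    rw [intervalIntegral.integral_const]
    simp
  have hr2 : (∫ u in (0:ℝ)..1, (1-u) * r u)
      = (∫ u in (0:ℝ)..1, (1-u) * (f u * A u)) + ∫ u in (0:ℝ)..1, (1-u) * D u := by
    rw [intervalIntegral.integral_congr
      (g := fun u => (1-u) * (f u * A u) + (1-u) * D u)
      (fun u _ => by simp only [hrdef]; ring)]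
    exact integral_add ((by fun_prop : Continuous fun u:ℝ => (1-u) * (f u * A u)).intervalIntegrable _ _)
      ((by fun_prop : Continuous fun u:ℝ => (1-u) * D u).intervalIntegrable _ _)
  -- ∫ (1-u) * D u via swap
  have hW : (∫ u in (0:ℝ)..1, (1-u) * D u)
      = (∫ u in (0:ℝ)..1, ((1-u)^2/2 * (1-u)) * f u) + S * (1/6)
        - ∫ u in (0:ℝ)..1, ((1-u)^3/6) * f u := by
    have h := swap_lemma (fun t => 1-t) d (by fun_prop) hdc
    beta_reduce at h
    have hLHS : (∫ u in (0:ℝ)..1, (1-u) * D u)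
        = ∫ x in (0:ℝ)..1, (1-x) * (∫ t in (0:ℝ)..x, d t) :=
      intervalIntegral.integral_congr (fun x _ => by simp [hDdef])
    rw [hLHS, h]
    have hwF : (∫ u in (0:ℝ)..1, ((1-u)^2/2) * F u)
        = ∫ u in (0:ℝ)..1, ((1-u)^3/6) * f u := by
      have h2 := swap_lemma (fun t => (1-t)^2/2) f (by fun_prop) hf
      beta_reduce at h2
      rw [intervalIntegral.integral_congr
        (g := fun x => ((1-x)^2/2) * (∫ t in (0:ℝ)..x, f t))
        (fun x _ => by simp [hFdef]), h2]
      refine intervalIntegral.integral_congr (fun u _ => ?_)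
      have : (∫ t in u..(1:ℝ), (1-t)^2/2)
          = ∫ t in u..(1:ℝ), ((1:ℝ)/2 + (-1)*t + (1/2)*t^2 + 0*t^3) :=
        intervalIntegral.integral_congr (fun t _ => by ring)
      rw [this, poly_int]
      ring_nf
    rw [intervalIntegral.integral_congr
      (g := fun u => ((1-u)^2/2 * (1-u)) * f u + (S * ((1-u)^2/2) - ((1-u)^2/2) * F u))
      (fun u _ => ?_)]
    · rw [integral_add ((by fun_prop : Continuous fun u:ℝ => ((1-u)^2/2 * (1-u)) * f u).intervalIntegrable _ _)
        (((by fun_prop : Continuous fun u:ℝ => S * ((1-u)^2/2)).intervalIntegrable _ _).sub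
          ((by fun_prop : Continuous fun u:ℝ => ((1-u)^2/2) * F u).intervalIntegrable _ _)),
        integral_sub ((by fun_prop : Continuous fun u:ℝ => S * ((1-u)^2/2)).intervalIntegrable _ _)
          ((by fun_prop : Continuous fun u:ℝ => ((1-u)^2/2) * F u).intervalIntegrable _ _), hwF]
      have : (∫ u in (0:ℝ)..1, S * ((1-u)^2/2))
          = ∫ u in (0:ℝ)..1, (S/2 + (-S)*u + (S/2)*u^2 + 0*u^3) :=
        intervalIntegral.integral_congr (fun u _ => by ring)
      rw [this, poly_int]
      ring
    · have : (∫ t in u..(1:ℝ), (1-t))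
          = ∫ t in u..(1:ℝ), ((1:ℝ) + (-1)*t + 0*t^2 + 0*t^3) :=
        intervalIntegral.integral_congr (fun t _ => by ring)
      rw [this, poly_int, hddef]
      ring
  -- the remaining big piece
  have hbig : (∫ x in (0:ℝ)..1, ((f x * A x + D x) * (1 - x) + A x * (S - F x)))
      = (∫ x in (0:ℝ)..1, (1-x) * (f x * A x)) + (∫ x in (0:ℝ)..1, (1-x) * D x)
        + (S * (1/3) - ∫ u in (0:ℝ)..1, (1/3 - u^2/2 + u^3/6) * f u) := by
    have hAF : (∫ x in (0:ℝ)..1, A x * F x)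
        = ∫ u in (0:ℝ)..1, (1/3 - u^2/2 + u^3/6) * f u := by
      have h2 := swap_lemma A f hAc hf
      beta_reduce at h2
      rw [intervalIntegral.integral_congr
        (g := fun x => A x * (∫ t in (0:ℝ)..x, f t)) (fun x _ => by simp [hFdef]), h2]
      refine intervalIntegral.integral_congr (fun u _ => ?_)
      have : (∫ t in u..(1:ℝ), A t)
          = ∫ t in u..(1:ℝ), ((0:ℝ) + 1*t + (-(1:ℝ)/2)*t^2 + 0*t^3) :=
        intervalIntegral.integral_congr (fun t _ => by simp only [hAdef]; ring)
      rw [this, poly_int]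
      ring_nf
    have hSA : (∫ x in (0:ℝ)..1, S * A x) = S * (1/3) := by
      have : (∫ x in (0:ℝ)..1, S * A x)
          = ∫ x in (0:ℝ)..1, (0 + S*x + (-S/2)*x^2 + 0*x^3) :=
        intervalIntegral.integral_congr (fun x _ => by simp only [hAdef]; ring)
      rw [this, poly_int]
      ring
    rw [intervalIntegral.integral_congr
      (g := fun x => ((1-x) * (f x * A x) + (1-x) * D x) + (S * A x - A x * F x))
      (fun x _ => by ring)]
    rw [integral_add
      (((by fun_prop : Continuous fun x:ℝ => (1-x) * (f x * A x)).intervalIntegrable _ _).add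
        ((by fun_prop : Continuous fun x:ℝ => (1-x) * D x).intervalIntegrable _ _))
      (((by fun_prop : Continuous fun x:ℝ => S * A x).intervalIntegrable _ _).sub
        ((by fun_prop : Continuous fun x:ℝ => A x * F x).intervalIntegrable _ _)),
      integral_add ((by fun_prop : Continuous fun x:ℝ => (1-x) * (f x * A x)).intervalIntegrable _ _)
        ((by fun_prop : Continuous fun x:ℝ => (1-x) * D x).intervalIntegrable _ _),
      integral_sub ((by fun_prop : Continuous fun x:ℝ => S * A x).intervalIntegrable _ _)
        ((by fun_prop : Continuous fun x:ℝ => A x * F x).intervalIntegrable _ _),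
      hSA, hAF]
  rw [hp1, hR, hr2, hW, hbig]
  -- combine the f-weighted integrals
  have hIa : IntervalIntegrable (fun x:ℝ => f x * (x^2/2 - x^3/6)) volume 0 1 :=
    (by fun_prop : Continuous fun x:ℝ => f x * (x^2/2 - x^3/6)).intervalIntegrable _ _
  have hIb : IntervalIntegrable (fun x:ℝ => 2*((1-x) * (f x * A x))) volume 0 1 :=
    (by fun_prop : Continuous fun x:ℝ => 2*((1-x) * (f x * A x))).intervalIntegrable _ _
  have hIc : IntervalIntegrable (fun x:ℝ => 2*(((1-x)^2/2 * (1-x)) * f x)) volume 0 1 :=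
    (by fun_prop : Continuous fun x:ℝ => 2*(((1-x)^2/2 * (1-x)) * f x)).intervalIntegrable _ _
  have hId : IntervalIntegrable (fun x:ℝ => 2*(((1-x)^3/6) * f x)) volume 0 1 :=
    (by fun_prop : Continuous fun x:ℝ => 2*(((1-x)^3/6) * f x)).intervalIntegrable _ _
  have hIe : IntervalIntegrable (fun x:ℝ => (1/3 - x^2/2 + x^3/6) * f x) volume 0 1 :=
    (by fun_prop : Continuous fun x:ℝ => (1/3 - x^2/2 + x^3/6) * f x).intervalIntegrable _ _
  have hsum : (∫ x in (0:ℝ)..1, (f x * (x^2/2 - x^3/6) + 2*((1-x) * (f x * A x))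
        + 2*(((1-x)^2/2 * (1-x)) * f x) - 2*(((1-x)^3/6) * f x) - (1/3 - x^2/2 + x^3/6) * f x))
      = (∫ x in (0:ℝ)..1, f x * (x^2/2 - x^3/6))
        + 2*(∫ x in (0:ℝ)..1, (1-x) * (f x * A x))
        + 2*(∫ x in (0:ℝ)..1, ((1-x)^2/2 * (1-x)) * f x)
        - 2*(∫ x in (0:ℝ)..1, ((1-x)^3/6) * f x)
        - ∫ x in (0:ℝ)..1, (1/3 - x^2/2 + x^3/6) * f x := by
    rw [integral_sub ((((hIa.add hIb).add hIc).sub hId)) hIe,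
      integral_sub ((hIa.add hIb).add hIc) hId,
      integral_add (hIa.add hIb) hIc, integral_add hIa hIb,
      intervalIntegral.integral_const_mul, intervalIntegral.integral_const_mul,
      intervalIntegral.integral_const_mul]
  have hval : (∫ x in (0:ℝ)..1, (f x * (x^2/2 - x^3/6) + 2*((1-x) * (f x * A x))
        + 2*(((1-x)^2/2 * (1-x)) * f x) - 2*(((1-x)^3/6) * f x) - (1/3 - x^2/2 + x^3/6) * f x))
      = S * (1/3) := by
    rw [intervalIntegral.integral_congr (g := fun x => (1/3 : ℝ) * f x)
      (fun x _ => by simp only [hAdef]; ring), intervalIntegral.integral_const_mul]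
    rw [hS]
    ring
  have := hsum.symm.trans hval
  linarith [this]

lemma poly_integral_eq (p : Polynomial ℚ) :
    (∫ x in (0:ℝ)..1, (Polynomial.aeval x) p)
      = ((∑ j ∈ Finset.range (p.natDegree + 1), p.coeff j / ((j:ℚ)+1) : ℚ) : ℝ) := by
  rw [intervalIntegral.integral_congr
    (g := fun x : ℝ => ∑ j ∈ Finset.range (p.natDegree+1), (p.coeff j : ℝ) * x ^ j)
    (fun x _ => by rw [Polynomial.aeval_eq_sum_range]; simp [Rat.smul_def])]
  rw [intervalIntegral.integral_finset_sum (f := fun j x => (p.coeff j : ℝ) * x ^ j)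
    (fun j _ => (continuous_const.mul (continuous_pow j)).intervalIntegrable _ _)]
  push_cast
  refine Finset.sum_congr rfl (fun j _ => ?_)
  rw [intervalIntegral.integral_const_mul, integral_pow]
  norm_num
  ring

end BS4Helpers

/-- In the four-species coefficient setup, $\int_0^1 q_k(x)\,dx = 1/4$; equivalently,
$\sum_{j\ge 1} \alpha_{k,j}/(j+1) = 1/4$ (the sum over all $j \ge 1$ is finite since
all but finitely many coefficients vanish). -/
theorem bs4_integral_one_quarter
    (q : ℕ → Polynomial ℚ)
    (hq1 : q 1 = X - X ^ 2 + C (1/3 : ℚ) * X ^ 3)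
    (hrec : ∀ k, 1 ≤ k → ∀ x ∈ Set.Icc (0 : ℝ) 1,
      (Polynomial.aeval x) (q (k + 1)) =
        ∫ ξ₁ in (0:ℝ)..1, ∫ ξ₂ in (0:ℝ)..1, ∫ ξ₃ in (0:ℝ)..1,
          if ξ₂ < min ξ₁ (min ξ₃ x) then
            (Polynomial.aeval x) (q k) + (Polynomial.aeval ξ₁) (q k)
              + (Polynomial.aeval ξ₂) (q k) + (Polynomial.aeval ξ₃) (q k)
          else 0)
    (k : ℕ) (hk : 1 ≤ k) :
    (∫ x in (0:ℝ)..1, (Polynomial.aeval x) (q k)) = 1 / 4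
    ∧ ∑ j ∈ Finset.Icc 1 (q k).natDegree, (q k).coeff j / ((j : ℚ) + 1) = 1 / 4 := by
  have h01 : (0:ℝ) ≤ 1 := by norm_num
  have huIcc : Set.uIcc (0:ℝ) 1 = Set.Icc 0 1 := Set.uIcc_of_le h01
  have main : ∀ n, 1 ≤ n → (∫ x in (0:ℝ)..1, (Polynomial.aeval x) (q n)) = 1/4 := by
    intro n hn
    induction n with
    | zero => omega
    | succ m ih =>
      cases m with
      | zero =>
        have e : Set.EqOn (fun x : ℝ => (Polynomial.aeval x) (q 1))
            (fun x : ℝ => 0 + 1*x + (-1)*x^2 + (1/3:ℝ)*x^3) (Set.uIcc 0 1) := by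
          intro x _
          show (Polynomial.aeval x) (q 1) = _
          rw [hq1]
          simp only [map_add, map_sub, map_mul, map_pow, Polynomial.aeval_X, Polynomial.aeval_C]
          push_cast
          ring_nf
          norm_num
        rw [intervalIntegral.integral_congr e, poly_int]
        norm_num
      | succ m' =>
        have hm : 1 ≤ m' + 1 := Nat.succ_le_succ (Nat.zero_le _)
        rw [intervalIntegral.integral_congr
          (g := fun x => ∫ ξ₁ in (0:ℝ)..1, ∫ ξ₂ in (0:ℝ)..1, ∫ ξ₃ in (0:ℝ)..1,
            if ξ₂ < min ξ₁ (min ξ₃ x) then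
              (Polynomial.aeval x) (q (m'+1)) + (Polynomial.aeval ξ₁) (q (m'+1))
                + (Polynomial.aeval ξ₂) (q (m'+1)) + (Polynomial.aeval ξ₃) (q (m'+1))
            else 0)
          (fun x hx => hrec (m'+1) hm x (huIcc ▸ hx)),
          key (fun t => (Polynomial.aeval t) (q (m'+1))) (Polynomial.continuous_aeval _)]
        exact ih hm
  have hc0 : ∀ n, 1 ≤ n → (q n).coeff 0 = 0 := by
    intro n hn
    cases n with
    | zero => omega
    | succ m =>
      cases m with
      | zero =>
        rw [hq1]
        simp
      | succ m' =>
        have h0 : (Polynomial.aeval (0:ℝ)) (q (m'+1+1)) = 0 := by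
          rw [hrec (m'+1) (Nat.succ_le_succ (Nat.zero_le _)) 0
            (Set.mem_Icc.2 ⟨le_refl _, h01⟩)]
          have inner : ∀ ξ₁ : ℝ, (∫ ξ₂ in (0:ℝ)..1, ∫ ξ₃ in (0:ℝ)..1,
              if ξ₂ < min ξ₁ (min ξ₃ (0:ℝ)) then
                (Polynomial.aeval (0:ℝ)) (q (m'+1)) + (Polynomial.aeval ξ₁) (q (m'+1))
                  + (Polynomial.aeval ξ₂) (q (m'+1)) + (Polynomial.aeval ξ₃) (q (m'+1))
              else 0) = 0 := by
            intro ξ₁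
            rw [intervalIntegral.integral_congr (g := fun _ => (0:ℝ)) (fun ξ₂ hξ₂ => ?_)]
            · simp
            · rw [huIcc] at hξ₂
              have e : (fun ξ₃ : ℝ => if ξ₂ < min ξ₁ (min ξ₃ (0:ℝ)) then
                  (Polynomial.aeval (0:ℝ)) (q (m'+1)) + (Polynomial.aeval ξ₁) (q (m'+1))
                    + (Polynomial.aeval ξ₂) (q (m'+1)) + (Polynomial.aeval ξ₃) (q (m'+1))
                  else 0) = fun _ => (0:ℝ) := by
                funext ξ₃
                rw [if_neg]
                intro hcon
                have := lt_of_lt_of_le hcon ((min_le_right _ _).trans (min_le_right _ _))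
                exact absurd this (not_lt.2 hξ₂.1)
              show (∫ ξ₃ in (0:ℝ)..1, _) = (0:ℝ)
              rw [e]
              simp
          rw [intervalIntegral.integral_congr (g := fun _ => (0:ℝ)) (fun ξ₁ _ => inner ξ₁)]
          simp
        have : (((q (m'+1+1)).coeff 0 : ℚ) : ℝ) = 0 := by
          rw [← h0, Polynomial.aeval_def, Polynomial.eval₂_at_zero]
          rfl
        exact_mod_cast this
  refine ⟨main k hk, ?_⟩
  have h1 := main k hk
  rw [poly_integral_eq] at h1
  have h2 : (∑ j ∈ Finset.range ((q k).natDegree + 1), (q k).coeff j / ((j:ℚ)+1)) = 1/4 :=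
    Rat.cast_injective (α := ℝ) (h1.trans (by norm_num))
  have hins : Finset.range ((q k).natDegree + 1) = insert 0 (Finset.Icc 1 (q k).natDegree) := by
    ext j
    simp [Nat.lt_succ_iff]
    omega
  rw [hins, Finset.sum_insert (by simp)] at h2
  rw [hc0 k hk] at h2
  simpa using h2
end

section
/- Let q(x) = (3/2)·x(3 − x(3 − x)) / (3 − x(3 − x(3 − x)))². Then q(x) ≥ 0 for all x ∈ [0,1] and ∫₀¹ q(x) dx = 1/4. Consequently the function g(x₁,x₂,x₃,x₄) = Σ_{ν=1}^4 q(x_ν) is nonnegative on [0,1]⁴ and satisfies ∫_{[0,1]⁴} g(x) dx = 1, i.e. g is a probability density on [0,1]⁴; it is the density of the stationary distribution μ of the four-species Bak–Sneppen model. -/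
open MeasureTheory

/-- The limiting single-site density `q` of the four-species Bak–Sneppen model. -/
noncomputable def bsQ (x : ℝ) : ℝ :=
  (3 / 2) * (x * (3 - x * (3 - x))) / (3 - x * (3 - x * (3 - x))) ^ 2

lemma bsD_ne (x : ℝ) (h0 : 0 ≤ x) (h1 : x ≤ 1) : (3 - x * (3 - x * (3 - x))) ≠ 0 := by
  nlinarith [pow_le_one₀ h0 h1 (n := 3), sq_nonneg x, sq_nonneg (1-x)]

lemma bsQ_nonneg : ∀ x ∈ Set.Icc (0:ℝ) 1, 0 ≤ bsQ x := by
  intro x hx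
  obtain ⟨h0, h1⟩ := hx
  apply div_nonneg _ (sq_nonneg _)
  nlinarith [sq_nonneg (x - 1)]

lemma bsQ_contOn : ContinuousOn bsQ (Set.Icc (0:ℝ) 1) := by
  apply ContinuousOn.div (by fun_prop) (by fun_prop)
  intro x hx
  exact pow_ne_zero 2 (bsD_ne x hx.1 hx.2)

lemma bsQ_hasDeriv (x : ℝ) (h0 : 0 ≤ x) (h1 : x ≤ 1) :
    HasDerivAt (fun y : ℝ => -(3/4) * (1 - y) / (3 - y * (3 - y * (3 - y)))) (bsQ x) x := by
  have hD := bsD_ne x h0 h1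
  have hN : HasDerivAt (fun y : ℝ => -(3/4) * (1 - y)) (3/4) x := by
    have := ((hasDerivAt_id x).const_sub (1:ℝ)).const_mul (-(3/4) : ℝ)
    simpa using this
  have hDen : HasDerivAt (fun y : ℝ => 3 - y * (3 - y * (3 - y))) (-3 + 6*x - 3*x^2) x := by
    have h : HasDerivAt (fun y : ℝ => 3 - 3*y + 3*y^2 - y^3) (-3 + 6*x - 3*x^2) x := by
      have h1' : HasDerivAt (fun y : ℝ => y) 1 x := hasDerivAt_id x
      have h2 : HasDerivAt (fun y : ℝ => y^2) (2*x) x := by simpa using hasDerivAt_pow 2 x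
      have h3 : HasDerivAt (fun y : ℝ => y^3) (3*x^2) x := by
        simpa using hasDerivAt_pow 3 x
      have := (((h1'.const_mul (3:ℝ)).const_sub 3).add (h2.const_mul (3:ℝ))).sub h3
      refine this.congr_deriv ?_
      ring
    convert h using 2 with y
    ring
  have := hN.div hDen (by exact hD)
  refine this.congr_deriv ?_
  unfold bsQ
  field_simp
  ring

lemma bsQ_integral : (∫ x in (0:ℝ)..1, bsQ x) = 1 / 4 := by
  have h := intervalIntegral.integral_eq_sub_of_hasDerivAt
    (f := fun y : ℝ => -(3/4) * (1 - y) / (3 - y * (3 - y * (3 - y)))) (f' := bsQ)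
    (a := 0) (b := 1)
    (fun x hx => by
      rw [Set.uIcc_of_le (by norm_num)] at hx
      exact bsQ_hasDeriv x hx.1 hx.2)
    (by
      apply ContinuousOn.intervalIntegrable
      rw [Set.uIcc_of_le (by norm_num)]
      exact bsQ_contOn)
  rw [h]; norm_num

/-- `q ≥ 0` on `[0,1]` with `∫₀¹ q = 1/4`; hence `g(x) = Σ_ν q(x_ν)` is a probability
density on `[0,1]⁴` (the density of the stationary distribution of the four-species
Bak–Sneppen model). -/
theorem bs4_stationary_is_probability_density :
    (∀ x ∈ Set.Icc (0 : ℝ) 1, 0 ≤ bsQ x)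
    ∧ (∫ x in (0:ℝ)..1, bsQ x) = 1 / 4
    ∧ (∀ x : Fin 4 → ℝ, (∀ ν, x ν ∈ Set.Icc (0 : ℝ) 1) → 0 ≤ ∑ ν : Fin 4, bsQ (x ν))
    ∧ (∫ x in (Set.univ.pi fun _ : Fin 4 => Set.Icc (0 : ℝ) 1),
        ∑ ν : Fin 4, bsQ (x ν)) = 1 := by
  have hInt1 : IntegrableOn bsQ (Set.Icc (0:ℝ) 1) volume :=
    bsQ_contOn.integrableOn_compact isCompact_Icc
  have hIccInt : (∫ x in Set.Icc (0:ℝ) 1, bsQ x) = 1/4 := by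
    rw [MeasureTheory.integral_Icc_eq_integral_Ioc,
      ← intervalIntegral.integral_of_le (by norm_num : (0:ℝ) ≤ 1)]
    exact bsQ_integral
  set S : Set (Fin 4 → ℝ) := Set.univ.pi fun _ : Fin 4 => Set.Icc (0:ℝ) 1 with hS
  have hSmeas : MeasurableSet S := MeasurableSet.univ_pi fun _ => measurableSet_Icc
  -- the per-coordinate factor functions
  set g : Fin 4 → Fin 4 → ℝ → ℝ := fun ν i t =>
    if i = ν then (Set.Icc (0:ℝ) 1).indicator bsQ t
    else (Set.Icc (0:ℝ) 1).indicator (fun _ => (1:ℝ)) t with hg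
  have hprod : ∀ ν : Fin 4, ∀ x : Fin 4 → ℝ,
      S.indicator (fun x => bsQ (x ν)) x = ∏ i : Fin 4, g ν i (x i) := by
    intro ν x
    by_cases hx : x ∈ S
    · rw [Set.indicator_of_mem hx]
      have hxi : ∀ i, x i ∈ Set.Icc (0:ℝ) 1 := fun i => hx i (Set.mem_univ i)
      rw [Finset.prod_eq_single ν
        (fun i _ hi => by simp [hg, hi, Set.indicator_of_mem (hxi i)])
        (by simp)]
      simp [hg, Set.indicator_of_mem (hxi ν)]
    · rw [Set.indicator_of_notMem hx]
      simp only [hS, Set.mem_pi, Set.mem_univ, forall_true_left] at hx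
      push_neg at hx
      obtain ⟨i, hi⟩ := hx
      refine (Finset.prod_eq_zero (Finset.mem_univ i) ?_).symm
      simp only [hg]
      split <;> exact Set.indicator_of_notMem hi _
  have hgint : ∀ ν i, Integrable (g ν i) volume := by
    intro ν i
    simp only [hg]
    split
    · exact (integrable_indicator_iff measurableSet_Icc).mpr hInt1
    · exact (integrable_indicator_iff measurableSet_Icc).mpr
        (integrableOn_const (by simp))
  have hintS : ∀ ν : Fin 4, IntegrableOn (fun x : Fin 4 → ℝ => bsQ (x ν)) S volume := by
    intro ν
    rw [← integrable_indicator_iff hSmeas]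
    have : S.indicator (fun x => bsQ (x ν)) = fun x => ∏ i : Fin 4, g ν i (x i) :=
      funext (hprod ν)
    rw [this]
    exact Integrable.fintype_prod (𝕜 := ℝ) (hgint ν)
  have key : ∀ ν : Fin 4, (∫ x in S, bsQ (x ν)) = 1/4 := by
    intro ν
    rw [← integral_indicator hSmeas]
    calc (∫ x, S.indicator (fun x => bsQ (x ν)) x)
        = ∫ x : Fin 4 → ℝ, ∏ i : Fin 4, g ν i (x i) := by
          simp_rw [hprod ν]
      _ = ∏ i : Fin 4, ∫ t : ℝ, g ν i t := integral_fintype_prod_eq_prod _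
      _ = 1/4 := by
          have he : ∀ i : Fin 4, (∫ t : ℝ, g ν i t) = if i = ν then 1/4 else 1 := by
            intro i
            simp only [hg]
            split
            · rw [integral_indicator measurableSet_Icc]; exact hIccInt
            · rw [integral_indicator measurableSet_Icc]
              simp [Real.volume_Icc]
          simp_rw [he]
          simp [Finset.prod_ite_eq' Finset.univ ν (fun _ => (1/4 : ℝ))]
  refine ⟨bsQ_nonneg, bsQ_integral, fun x hx =>
    Finset.sum_nonneg fun ν _ => bsQ_nonneg _ (hx ν), ?_⟩
  rw [integral_finset_sum _ (fun ν _ => hintS ν)]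
  simp only [key]
  norm_num
end
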